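/- Let w be a 2D word of size (2,n) over an alphabet Σ, with n ≥ 1. Then the number of distinct nonempty HV-palindromic factors of w is at most 2n. -/

import Mathlib

/-- A finite 2D word over `A`: a pair of dimensions together with a matrix of letters. -/
def Word2D (A : Type*) := (k : ℕ) × (l : ℕ) × (Fin k → Fin l → A)

/-- A 2D word `w` is a 2D palindrome if it equals its reverse. -/
def IsPal2D {A : Type*} {m n : ℕ} (w : Fin m → Fin n → A) : Prop :=
  ∀ i j, w i j = w i.rev j.rev

/-- A 2D word is an HV-palindrome if every row and every column is a palindrome. -/
def IsHVPal {A : Type*} {m n : ℕ} (w : Fin m → Fin n → A) : Prop :=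
  (∀ i j, w i j = w i j.rev) ∧ (∀ i j, w i j = w i.rev j)

/-- `p` is a factor (sub-array) of `w`. -/
def IsFactor {A : Type*} {k l m n : ℕ} (p : Fin k → Fin l → A)
    (w : Fin m → Fin n → A) : Prop :=
  ∃ r c, ∃ (h1 : r + k ≤ m) (h2 : c + l ≤ n),
    ∀ (i : Fin k) (j : Fin l),
      p i j = w ⟨r + i, by have := i.isLt; omega⟩ ⟨c + j, by have := j.isLt; omega⟩

/-- The set of distinct nonempty HV-palindromic factors of `w`. -/
def HVFactors {A : Type*} {m n : ℕ} (w : Fin m → Fin n → A) : Set (Word2D A) :=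
  {p | 0 < p.1 ∧ 0 < p.2.1 ∧ IsHVPal p.2.2 ∧ IsFactor p.2.2 w}

/-- The set of distinct nonempty 2D palindromic factors of `w`. -/
def PalFactors {A : Type*} {m n : ℕ} (w : Fin m → Fin n → A) : Set (Word2D A) :=
  {p | 0 < p.1 ∧ 0 < p.2.1 ∧ IsPal2D p.2.2 ∧ IsFactor p.2.2 w}

section Aux

variable {A : Type*}

/-- The set of nonempty palindromic infixes of a list. -/
def PalInfix (u : List A) : Set (List A) :=
  {s | s ≠ [] ∧ s.reverse = s ∧ s <:+: u}

lemma palInfix_finite (u : List A) : (PalInfix u).Finite := by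
  apply (u.sublists.finite_toSet).subset
  intro s hs
  exact List.mem_sublists.2 hs.2.2.sublist

lemma suffix_of_suffix_length_le' {s t u : List A} (hs : s <:+ u) (ht : t <:+ u)
    (h : s.length ≤ t.length) : s <:+ t := by
  rw [← List.reverse_prefix] at hs ht ⊢
  exact List.prefix_of_prefix_length_le hs ht (by simpa using h)

lemma palInfix_card_le (u : List A) : (PalInfix u).ncard ≤ u.length := by
  induction u using List.reverseRecOn with
  | nil =>
    have : PalInfix ([] : List A) = ∅ := by
      ext s; simp only [PalInfix, Set.mem_setOf_eq, Set.mem_empty_iff_false, iff_false]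
      rintro ⟨h1, -, h3⟩
      exact h1 (List.eq_nil_of_infix_nil h3)
    simp [this]
  | append_singleton v a ih =>
    set u := v ++ [a] with hu
    have hSfin : ({s | s ∈ PalInfix u ∧ s <:+ u}).Finite :=
      (palInfix_finite u).subset (fun s hs => hs.1)
    have hSne : ({s | s ∈ PalInfix u ∧ s <:+ u}).Nonempty := by
      refine ⟨[a], ⟨⟨by simp, by simp, ?_⟩, ?_⟩⟩
      · exact (List.suffix_append v [a]).isInfix
      · exact List.suffix_append v [a]
    obtain ⟨t, ht, htmax⟩ := Set.Finite.exists_maximalFor List.length _ hSfin hSne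
    have hsub : PalInfix u ⊆ insert t (PalInfix v) := by
      intro s hs
      obtain ⟨hne, hpal, x, y, hxy⟩ := hs
      rcases eq_or_ne y [] with rfl | hy
      · -- s is a suffix of u
        have hsuf : s <:+ u := ⟨x, by simpa using hxy⟩
        have hsS : s ∈ {s | s ∈ PalInfix u ∧ s <:+ u} := ⟨⟨hne, hpal, hsuf.isInfix⟩, hsuf⟩
        rcases eq_or_ne s t with rfl | hst
        · exact Set.mem_insert _ _
        · have hlen : s.length < t.length := by
            by_contra h
            push_neg at h
            have heq : t.length = s.length := by have := htmax hsS h; omega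
            have : s = t :=
              (suffix_of_suffix_length_le' hsuf ht.2 (by omega)).eq_of_length (by omega)
            exact hst this
          -- s is a proper prefix of the palindrome t
          have hst' : s <:+ t := suffix_of_suffix_length_le' hsuf ht.2 hlen.le
          have hspre : s <+: t := by
            have := List.reverse_prefix.mpr hst'
            rwa [hpal, ht.1.2.1] at this
          obtain ⟨r, hr⟩ := hspre
          obtain ⟨x', hx'⟩ := ht.2
          have hrne : r ≠ [] := by
            intro h; rw [h, List.append_nil] at hr; exact hst hr
          have hpref : x' ++ s <+: u := ⟨r, by rw [List.append_assoc, hr, hx']⟩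
          have hlenv : (x' ++ s).length ≤ v.length := by
            have h1 : u.length = v.length + 1 := by simp [hu]
            have h2 : x'.length + s.length + r.length = u.length := by
              have := congrArg List.length hx'
              rw [← hr] at this
              simpa [Nat.add_assoc] using this
            have h3 : 1 ≤ r.length := List.length_pos_iff.2 hrne
            simp only [List.length_append]
            omega
          have hprefv : x' ++ s <+: v :=
            List.prefix_of_prefix_length_le hpref (List.prefix_append v [a]) hlenv
          right
          exact ⟨hne, hpal, ((List.suffix_append x' s).isInfix).trans hprefv.isInfix⟩
      · rcases y.eq_nil_or_concat with rfl | ⟨y', b, rfl⟩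
        · exact absurd rfl hy
        right
        refine ⟨hne, hpal, x, y', ?_⟩
        have : (x ++ s ++ y') ++ [b] = v ++ [a] := by
          simpa [List.append_assoc] using hxy
        exact (List.append_inj' this (by simp)).1
    calc (PalInfix u).ncard ≤ (insert t (PalInfix v)).ncard :=
          Set.ncard_le_ncard hsub ((palInfix_finite v).insert t)
      _ ≤ (PalInfix v).ncard + 1 := Set.ncard_insert_le _ _
      _ ≤ v.length + 1 := by omega
      _ = u.length := by simp [hu]

lemma ofFn_pal {l : ℕ} {s : Fin l → A} (h : ∀ j, s j = s j.rev) :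
    (List.ofFn s).reverse = List.ofFn s := by
  apply List.ext_getElem (by simp)
  intro i h1 h2
  simp only [List.length_reverse, List.length_ofFn] at h1 h2
  rw [List.getElem_reverse, List.getElem_ofFn, List.getElem_ofFn]
  rw [h ⟨_, by simp; omega⟩]
  congr 1
  ext
  simp [Fin.val_rev]
  omega

lemma ofFn_infix {l n : ℕ} {s : Fin l → A} {u : Fin n → A} {c : ℕ} (hc : c + l ≤ n)
    (h : ∀ j : Fin l, s j = u ⟨c + j, by have := j.isLt; omega⟩) :
    List.ofFn s <:+: List.ofFn u := by
  have heq : List.ofFn s = ((List.ofFn u).drop c).take l := by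
    apply List.ext_getElem (by simp; omega)
    intro i h1 h2
    simp only [List.length_ofFn] at h1
    rw [List.getElem_ofFn, List.getElem_take, List.getElem_drop, List.getElem_ofFn]
    exact h ⟨i, h1⟩
  rw [heq]
  exact ((List.take_prefix _ _).isInfix).trans ((List.drop_suffix _ _).isInfix)

lemma ncard_singleton_prod' {α β : Type*} (x : α) (s : Set β) :
    ({x} ×ˢ s : Set (α × β)).ncard = s.ncard := by
  rw [Set.singleton_prod]
  exact Set.ncard_image_of_injective _ (fun a b h => by simpa using h)

end Aux

/-- a 2D word of size `(2,n)` has at most `2n` distinct nonempty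
HV-palindromic factors. -/
theorem stmt_11 {A : Type*} (n : ℕ) (hn : 1 ≤ n) (w : Fin 2 → Fin n → A) :
    (HVFactors w).ncard ≤ 2 * n := by
  classical
  set P : Fin 2 → Set (List A) := fun i => PalInfix (List.ofFn (w i)) with hP
  set T : Set (ℕ × List A) :=
    ({1} ×ˢ (P 0 ∪ P 1)) ∪ ({2} ×ˢ (P 0 ∩ P 1)) with hT
  set Φ : Word2D A → ℕ × List A :=
    (fun p => (p.1, if h : 0 < p.1 then List.ofFn (p.2.2 ⟨0, h⟩) else [])) with hΦ
  -- image is contained in T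
  have himg : Φ '' HVFactors w ⊆ T := by
    rintro - ⟨⟨k, l, f⟩, ⟨hk0, hl0, hpal0, r, c, h10, h20, hf0⟩, rfl⟩
    have hk : 0 < k := hk0
    have hl : 0 < l := hl0
    have hpal : IsHVPal f := hpal0
    have h1 : r + k ≤ 2 := h10
    have h2 : c + l ≤ n := h20
    have hf : ∀ (i : Fin k) (j : Fin l),
        f i j = w ⟨r + i, by have := i.isLt; omega⟩ ⟨c + j, by have := j.isLt; omega⟩ := hf0
    have hΦp : Φ ⟨k, l, f⟩ = (k, List.ofFn (f ⟨0, hk⟩)) := by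
      simp only [hΦ, dif_pos hk0]
    rw [hΦp]
    have hpalrow : (List.ofFn (f ⟨0, hk⟩)).reverse = List.ofFn (f ⟨0, hk⟩) :=
      ofFn_pal (fun j => hpal.1 _ j)
    have hnil : List.ofFn (f ⟨0, hk⟩) ≠ [] := by
      simp only [ne_eq, List.ofFn_eq_nil_iff]; omega
    have hk2 : k = 1 ∨ k = 2 := by omega
    rcases hk2 with rfl | rfl
    · -- height 1
      left
      refine ⟨rfl, ?_⟩
      have hr : r = 0 ∨ r = 1 := by omega
      have hinf : ∀ (hr2 : r < 2),
          List.ofFn (f ⟨0, hk⟩) <:+: List.ofFn (w ⟨r, hr2⟩) := by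
        intro hr2
        apply ofFn_infix h2
        intro j
        exact hf ⟨0, hk⟩ j
      rcases hr with rfl | rfl
      · exact Or.inl ⟨hnil, hpalrow, hinf (by omega)⟩
      · exact Or.inr ⟨hnil, hpalrow, hinf (by omega)⟩
    · -- height 2
      right
      have hr0 : r = 0 := by omega
      subst hr0
      have hrev : (⟨0, hk⟩ : Fin 2).rev = ⟨1, by omega⟩ := by
        apply Fin.ext; simp [Fin.val_rev]
      refine ⟨rfl, ?_, ?_⟩
      · refine ⟨hnil, hpalrow, ?_⟩
        apply ofFn_infix h2
        intro j
        exact hf ⟨0, hk⟩ j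
      · refine ⟨hnil, hpalrow, ?_⟩
        apply ofFn_infix h2
        intro j
        have hrow : f ⟨0, hk⟩ j = f ⟨1, by omega⟩ j := by
          have h := hpal.2 ⟨0, hk⟩ j
          rwa [hrev] at h
        rw [hrow]
        exact hf ⟨1, by omega⟩ j
  -- Φ is injective on HVFactors
  have hinj : Set.InjOn Φ (HVFactors w) := by
    rintro ⟨k1, l1, f1⟩ ⟨hk10, hl10, hpal10, hfac1⟩ ⟨k2, l2, f2⟩ ⟨hk20, hl20, hpal20, hfac2⟩ h
    have hk1 : 0 < k1 := hk10
    have hk2 : 0 < k2 := hk20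
    have hpal1 : IsHVPal f1 := hpal10
    have hpal2 : IsHVPal f2 := hpal20
    simp only [hΦ, dif_pos hk10, dif_pos hk20, Prod.mk.injEq] at h
    obtain ⟨hkk, hrows⟩ := h
    subst hkk
    have hll : l1 = l2 := by
      have := congrArg List.length hrows
      simpa using this
    subst hll
    have hrow : f1 ⟨0, hk1⟩ = f2 ⟨0, hk2⟩ := List.ofFn_inj.mp hrows
    have hff : f1 = f2 := by
      funext i j
      have hi : i = ⟨0, hk1⟩ ∨ (i.val = 1 ∧ 1 < k1) := by
        have := i.isLt
        rcases Nat.eq_or_lt_of_le (Nat.one_le_iff_ne_zero.mpr (by omega) : 1 ≤ k1) with h | h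
        · left; apply Fin.ext; omega
        · rcases Nat.eq_zero_or_pos i.val with h0 | h0
          · left; apply Fin.ext; simpa using h0
          · right
            constructor
            · -- i.val = 1 since k1 ≤ 2
              obtain ⟨r, c, h1, h2, -⟩ := hfac1
              have h1' : r + k1 ≤ 2 := h1
              omega
            · obtain ⟨r, c, h1, h2, -⟩ := hfac1
              have h1' : r + k1 ≤ 2 := h1
              omega
      rcases hi with rfl | ⟨hi1, hik⟩
      · rw [hrow]
      · have hk1eq : k1 = 2 := by
          obtain ⟨r, c, h1, h2, -⟩ := hfac1
          have h1' : r + k1 ≤ 2 := h1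
          omega
        subst hk1eq
        have hrev : (⟨0, hk1⟩ : Fin 2).rev = i := by
          apply Fin.ext; simp [Fin.val_rev]; omega
        calc f1 i j = f1 ⟨0, hk1⟩ j := by
              have h := hpal1.2 ⟨0, hk1⟩ j
              rw [hrev] at h
              exact h.symm
          _ = f2 ⟨0, hk2⟩ j := by rw [hrow]
          _ = f2 i j := by
              have h := hpal2.2 ⟨0, hk2⟩ j
              rwa [hrev] at h
    rw [hff]
  -- finiteness
  have hfin01 : (P 0 ∪ P 1).Finite := (palInfix_finite _).union (palInfix_finite _)
  have hfinI : (P 0 ∩ P 1).Finite := (palInfix_finite _).inter_of_left _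
  have hTfin : T.Finite := by
    apply Set.Finite.union
    · exact (Set.finite_singleton _).prod hfin01
    · exact (Set.finite_singleton _).prod hfinI
  -- counting
  have hcard1 : (HVFactors w).ncard = (Φ '' HVFactors w).ncard :=
    (Set.ncard_image_of_injOn hinj).symm
  have hcard2 : (Φ '' HVFactors w).ncard ≤ T.ncard :=
    Set.ncard_le_ncard himg hTfin
  have hcard3 : T.ncard ≤ (P 0 ∪ P 1).ncard + (P 0 ∩ P 1).ncard := by
    calc T.ncard ≤ ({(1:ℕ)} ×ˢ (P 0 ∪ P 1)).ncard + ({(2:ℕ)} ×ˢ (P 0 ∩ P 1)).ncard :=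
          Set.ncard_union_le _ _
      _ = (P 0 ∪ P 1).ncard + (P 0 ∩ P 1).ncard := by
          rw [ncard_singleton_prod', ncard_singleton_prod']
  have hcard4 : (P 0 ∪ P 1).ncard + (P 0 ∩ P 1).ncard = (P 0).ncard + (P 1).ncard :=
    Set.ncard_union_add_ncard_inter _ _ (palInfix_finite _) (palInfix_finite _)
  have hcard5 : (P 0).ncard + (P 1).ncard ≤ 2 * n := by
    have h0 := palInfix_card_le (List.ofFn (w 0))
    have h1 := palInfix_card_le (List.ofFn (w 1))
    simp only [List.length_ofFn] at h0 h1
    simp only [hP]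
    omega
  omega
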